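/- If two rays r_{θ-ε} and r_{θ+ε} from q pass through no vertex of P and no vertex of P has angle in (θ-ε, θ+ε), then the sets of edges of P intersected by r_{θ-ε} and by r_{θ+ε} are equal. -/

import Mathlib

open Set

/-- A simple polygon in the plane, given by its cyclic sequence of vertices.
Non-adjacent edges are disjoint, and adjacent edges meet exactly in their
shared vertex. -/
structure SimplePolygon where
  n : ℕ
  three_le : 3 ≤ n
  vtx : ZMod n → ℝ × ℝ
  inj : Function.Injective vtx
  nondegenerate : ∀ i j : ZMod n, i ≠ j → i + 1 ≠ j → j + 1 ≠ i →
    segment ℝ (vtx i) (vtx (i + 1)) ∩ segment ℝ (vtx j) (vtx (j + 1)) = ∅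
  consecutive : ∀ i : ZMod n,
    segment ℝ (vtx i) (vtx (i + 1)) ∩ segment ℝ (vtx (i + 1)) (vtx (i + 1 + 1))
      = {vtx (i + 1)}

namespace SimplePolygon

variable (P : SimplePolygon)

/-- The `i`-th edge of the polygon, from vertex `i` to vertex `i+1`. -/
def edge (i : ZMod P.n) : Set (ℝ × ℝ) := segment ℝ (P.vtx i) (P.vtx (i + 1))

/-- The boundary `∂P` of the polygon: the union of its edges. -/
def boundary : Set (ℝ × ℝ) := ⋃ i : ZMod P.n, P.edge i

/-- The interior of the polygon (Jordan): points off the boundary whose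
connected component in the complement of the boundary is bounded. -/
def inside : Set (ℝ × ℝ) :=
  {x | x ∉ P.boundary ∧ Bornology.IsBounded (connectedComponentIn P.boundaryᶜ x)}

/-- The polygon as a region of the plane: interior together with boundary. -/
def region : Set (ℝ × ℝ) := P.inside ∪ P.boundary

/-- The set of (indices of) edges of `P` properly met by the open segment `qp`
(the endpoints `q`, `p` are not counted). -/
def crossSet (q p : ℝ × ℝ) : Set (ZMod P.n) :=
  {i | (openSegment ℝ q p ∩ P.edge i).Nonempty}

/-- The number of times the segment `qp` crosses the boundary of `P`
(endpoints not counted). -/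
noncomputable def crossCount (q p : ℝ × ℝ) : ℕ := (P.crossSet q p).ncard

/-- The k-visibility region `V_k(P,q)`: the points of `P` whose segment to `q`
crosses the boundary at most `k` times. -/
def vis (q : ℝ × ℝ) (k : ℕ) : Set (ℝ × ℝ) :=
  {p | p ∈ P.region ∧ P.crossCount q p ≤ k}

/-- No vertex of `P` lies on the segment `qp`. -/
def segAvoidsVtx (q p : ℝ × ℝ) : Prop := ∀ i : ZMod P.n, P.vtx i ∉ segment ℝ q p

/-- Weak general position: `q` lies on no line through two vertices of `P`. -/
def wgp (q : ℝ × ℝ) : Prop :=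
  ∀ i j : ZMod P.n, i ≠ j → ¬ Collinear ℝ ({q, P.vtx i, P.vtx j} : Set (ℝ × ℝ))

/-- Signed area test: positive iff `x` is strictly to the left of the ray `qv`. -/
noncomputable def cross2 (q v x : ℝ × ℝ) : ℝ :=
  (v.1 - q.1) * (x.2 - q.2) - (v.2 - q.2) * (x.1 - q.1)

/-- Vertex `i` is critical for `q`: both incident edges (i.e. both neighbouring
vertices) lie strictly on the same side of the line through `q` and `vtx i`. -/
def isCritical (q : ℝ × ℝ) (i : ZMod P.n) : Prop :=
  0 < cross2 q (P.vtx i) (P.vtx (i - 1)) * cross2 q (P.vtx i) (P.vtx (i + 1))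

/-- A start critical vertex: both incident edges to the left of ray `qv`. -/
def isStart (q : ℝ × ℝ) (i : ZMod P.n) : Prop :=
  0 < cross2 q (P.vtx i) (P.vtx (i - 1)) ∧ 0 < cross2 q (P.vtx i) (P.vtx (i + 1))

/-- An end critical vertex: both incident edges to the right of ray `qv`. -/
def isEnd (q : ℝ × ℝ) (i : ZMod P.n) : Prop :=
  cross2 q (P.vtx i) (P.vtx (i - 1)) < 0 ∧ cross2 q (P.vtx i) (P.vtx (i + 1)) < 0

/-- The unit vector of direction `θ`. -/
noncomputable def dir (θ : ℝ) : ℝ × ℝ := (Real.cos θ, Real.sin θ)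

/-- The ray `r_θ` from `q` in direction `θ`. -/
def rayFrom (q : ℝ × ℝ) (θ : ℝ) : Set (ℝ × ℝ) :=
  {x | ∃ t : ℝ, 0 ≤ t ∧ x = q + t • dir θ}

/-- The edge list of the ray `r_θ` (as a set of edge indices). -/
def hits (q : ℝ × ℝ) (θ : ℝ) : Set (ZMod P.n) :=
  {i | (rayFrom q θ ∩ P.edge i).Nonempty}

/-- The parameter (distance from `q`) at which the ray `r_θ` first meets edge `i`. -/
noncomputable def hitTime (q : ℝ × ℝ) (θ : ℝ) (i : ZMod P.n) : ℝ :=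
  sInf {t : ℝ | 0 ≤ t ∧ q + t • dir θ ∈ P.edge i}

/-- The position (rank) of edge `i` in the distance-ordered edge list of `r_θ`:
the number of hit edges met strictly earlier. -/
noncomputable def rank (q : ℝ × ℝ) (θ : ℝ) (i : ZMod P.n) : ℕ :=
  {j | j ∈ P.hits q θ ∧ P.hitTime q θ j < P.hitTime q θ i}.ncard

end SimplePolygon

open SimplePolygon


/-- cross product of two vectors in the plane -/
noncomputable def crv (u w : ℝ × ℝ) : ℝ := u.1 * w.2 - u.2 * w.1

lemma crv_ne_zero_of_not_collinear {q a b : ℝ × ℝ}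
    (h : ¬ Collinear ℝ ({q, a, b} : Set (ℝ × ℝ))) : crv (q - a) (b - a) ≠ 0 := by
  intro h0
  apply h
  rcases eq_or_ne b a with rfl | hba
  · have hset : ({q, b, b} : Set (ℝ × ℝ)) = {q, b} := by simp
    rw [hset]; exact collinear_pair ℝ q b
  have hw : b - a ≠ 0 := sub_ne_zero.mpr hba
  simp only [crv, Prod.fst_sub, Prod.snd_sub] at h0
  have key : ∃ c : ℝ, q - a = c • (b - a) := by
    rcases eq_or_ne (b.1 - a.1) 0 with h1 | h1
    · have h2 : b.2 - a.2 ≠ 0 := by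
        intro h2
        apply hw
        have : b.1 = a.1 := by linarith
        have : b.2 = a.2 := by linarith
        ext <;> simp [*]
      refine ⟨(q.2 - a.2) / (b.2 - a.2), Prod.ext ?_ ?_⟩ <;>
        simp only [Prod.fst_sub, Prod.snd_sub, Prod.smul_fst, Prod.smul_snd, smul_eq_mul]
      · rw [h1, mul_zero]
        have hz : (q.2 - a.2) * (b.1 - a.1) = 0 := by rw [h1, mul_zero]
        have : (q.1 - a.1) * (b.2 - a.2) = 0 := by linarith
        rcases mul_eq_zero.mp this with h | h
        · linarith
        · exact absurd h h2
      · field_simp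
    · refine ⟨(q.1 - a.1) / (b.1 - a.1), Prod.ext ?_ ?_⟩ <;>
        simp only [Prod.fst_sub, Prod.snd_sub, Prod.smul_fst, Prod.smul_snd, smul_eq_mul]
      · field_simp
      · rw [div_mul_eq_mul_div, eq_div_iff h1]; nlinarith
  obtain ⟨c, hc⟩ := key
  rw [collinear_iff_of_mem (show a ∈ ({q, a, b} : Set (ℝ × ℝ)) by simp)]
  refine ⟨b - a, ?_⟩
  rintro p (rfl | rfl | rfl)
  · refine ⟨c, ?_⟩
    have : p = c • (b - a) + a := by rw [← hc]; abel
    simpa [vadd_eq_add] using this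
  · exact ⟨0, by simp⟩
  · exact ⟨1, by simp [vadd_eq_add]⟩

/-- Euclidean norm on the plane. -/
noncomputable def euc (p : ℝ × ℝ) : ℝ := Real.sqrt (p.1 ^ 2 + p.2 ^ 2)

lemma continuous_euc : Continuous euc := by
  apply Real.continuous_sqrt.comp
  fun_prop

lemma euc_smul_dir (t φ : ℝ) (ht : 0 ≤ t) : euc (t • dir φ) = t := by
  simp only [euc, dir, Prod.smul_fst, Prod.smul_snd, smul_eq_mul]
  have : (t * Real.cos φ) ^ 2 + (t * Real.sin φ) ^ 2 = t ^ 2 := by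
    have := Real.sin_sq_add_cos_sq φ
    nlinarith
  rw [this, Real.sqrt_sq ht]

lemma continuous_dir : Continuous dir := by
  unfold dir; fun_prop

lemma isCompact_edge (P : SimplePolygon) (i : ZMod P.n) : IsCompact (P.edge i) := by
  rw [SimplePolygon.edge, segment_eq_image' ℝ]
  exact isCompact_Icc.image (by fun_prop)

/-- The set of angles whose ray meets a fixed compact set avoiding `q` is closed. -/
lemma isClosed_hitSet (P : SimplePolygon) (q : ℝ × ℝ) (i : ZMod P.n) :
    IsClosed {φ : ℝ | (rayFrom q φ ∩ P.edge i).Nonempty} := by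
  apply IsSeqClosed.isClosed
  intro φn φ hmem hlim
  choose y hy using hmem
  choose t ht0 hty using fun n => (hy n).1
  obtain ⟨x, hx, ψ, hψ, hyx⟩ := (isCompact_edge P i).tendsto_subseq (fun n => (hy n).2)
  have hte : ∀ n, t n = euc (y n - q) := by
    intro n
    rw [hty n, add_sub_cancel_left, euc_smul_dir _ _ (ht0 n)]
  have h1 : Filter.Tendsto (fun k => t (ψ k)) Filter.atTop (nhds (euc (x - q))) := by
    have : Filter.Tendsto (fun k => y (ψ k) - q) Filter.atTop (nhds (x - q)) :=
      hyx.sub tendsto_const_nhds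
    simpa [hte, Function.comp_def] using (continuous_euc.tendsto _).comp this
  have h2 : Filter.Tendsto (fun k => dir (φn (ψ k))) Filter.atTop (nhds (dir φ)) :=
    (continuous_dir.tendsto _).comp (hlim.comp hψ.tendsto_atTop)
  have h3 : Filter.Tendsto (fun k => q + t (ψ k) • dir (φn (ψ k))) Filter.atTop
      (nhds (q + euc (x - q) • dir φ)) :=
    tendsto_const_nhds.add (h1.smul h2)
  have h4 : x = q + euc (x - q) • dir φ := by
    refine tendsto_nhds_unique ?_ h3
    simpa [← hty, Function.comp_def] using hyx
  exact ⟨x, ⟨euc (x - q), Real.sqrt_nonneg _, h4⟩, hx⟩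


lemma ray_meets (q a w u : ℝ × ℝ) (hD : crv u w ≠ 0) :
    q + (crv (a - q) w / crv u w) • u = a + (crv u (q - a) / crv u w) • w := by
  have h := hD
  simp only [crv, Prod.fst_sub, Prod.snd_sub] at h
  apply Prod.ext <;>
    simp only [Prod.fst_add, Prod.snd_add, Prod.smul_fst, Prod.smul_snd, smul_eq_mul,
      crv, Prod.fst_sub, Prod.snd_sub] <;>
  · rw [div_mul_eq_mul_div, div_mul_eq_mul_div, add_div' _ _ _ h, add_div' _ _ _ h,
      div_left_inj' h]
    ring

/-- Openness: if the ray at angle `φ₀` meets edge `i` away from its endpoints,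
nearby rays meet it too. -/
lemma hitSet_mem_nhds (P : SimplePolygon) (q : ℝ × ℝ) (i : ZMod P.n) (φ₀ : ℝ)
    (hqe : q ∉ P.edge i)
    (hcol : ¬ Collinear ℝ ({q, P.vtx i, P.vtx (i + 1)} : Set (ℝ × ℝ)))
    (hva : P.vtx i ∉ rayFrom q φ₀) (hvb : P.vtx (i + 1) ∉ rayFrom q φ₀)
    (hhit : (rayFrom q φ₀ ∩ P.edge i).Nonempty) :
    {φ : ℝ | (rayFrom q φ ∩ P.edge i).Nonempty} ∈ nhds φ₀ := by
  set a := P.vtx i with ha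
  set b := P.vtx (i + 1) with hb
  obtain ⟨x, ⟨t₀, ht₀, hxr⟩, hxe⟩ := hhit
  rw [SimplePolygon.edge, segment_eq_image' ℝ] at hxe
  obtain ⟨s₀, hs₀, hxs⟩ := hxe
  -- t₀ is positive
  have ht₀pos : 0 < t₀ := by
    rcases ht₀.lt_or_eq with h | h
    · exact h
    · exfalso
      apply hqe
      rw [SimplePolygon.edge, segment_eq_image' ℝ]
      refine ⟨s₀, hs₀, ?_⟩
      rw [hxs, hxr, ← h, zero_smul, add_zero]
  -- s₀ is strictly between 0 and 1
  have hs0 : 0 < s₀ := by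
    rcases hs₀.1.lt_or_eq with h | h
    · exact h
    · exfalso
      apply hva
      refine ⟨t₀, ht₀, ?_⟩
      rw [← hxr, ← hxs, ← h]
      simp
      exact ha
  have hs1 : s₀ < 1 := by
    rcases hs₀.2.eq_or_lt with h | h
    · exfalso
      apply hvb
      refine ⟨t₀, ht₀, ?_⟩
      rw [← hxr, ← hxs, h]
      show b = P.vtx i + (1 : ℝ) • (P.vtx (i + 1) - P.vtx i)
      rw [one_smul]
      abel
    · exact h
  -- the key intersection equation
  have key : a + s₀ • (b - a) = q + t₀ • dir φ₀ := hxs.trans hxr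
  have key1 : a.1 + s₀ * (b.1 - a.1) = q.1 + t₀ * (dir φ₀).1 := by
    have := congrArg Prod.fst key
    simpa using this
  have key2 : a.2 + s₀ * (b.2 - a.2) = q.2 + t₀ * (dir φ₀).2 := by
    have := congrArg Prod.snd key
    simpa using this
  have e1 : q.1 - a.1 = s₀ * (b.1 - a.1) - t₀ * (dir φ₀).1 := by linarith
  have e2 : q.2 - a.2 = s₀ * (b.2 - a.2) - t₀ * (dir φ₀).2 := by linarith
  -- the direction is not parallel to the edge
  have hDq : crv (q - a) (b - a) ≠ 0 := crv_ne_zero_of_not_collinear hcol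
  have hrel : crv (q - a) (b - a) = -t₀ * crv (dir φ₀) (b - a) := by
    simp only [crv, Prod.fst_sub, Prod.snd_sub]
    rw [e1, e2]; ring
  have hD0 : crv (dir φ₀) (b - a) ≠ 0 := by
    intro h
    apply hDq
    rw [hrel, h, mul_zero]
  -- the intersection parameters, as functions of the angle
  set D : ℝ → ℝ := fun φ => crv (dir φ) (b - a) with hDdef
  set T : ℝ → ℝ := fun φ => crv (a - q) (b - a) / D φ with hTdef
  set S : ℝ → ℝ := fun φ => crv (dir φ) (q - a) / D φ with hSdef
  have hcD : Continuous D := by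
    simp only [hDdef, crv, dir]
    fun_prop
  have hcT : ContinuousAt T φ₀ := ContinuousAt.div continuousAt_const hcD.continuousAt hD0
  have hcS : ContinuousAt S φ₀ := by
    apply ContinuousAt.div _ hcD.continuousAt hD0
    simp only [crv, dir]
    fun_prop
  -- values at φ₀
  have hT0 : T φ₀ = t₀ := by
    have hnum : crv (a - q) (b - a) = t₀ * crv (dir φ₀) (b - a) := by
      simp only [crv, Prod.fst_sub, Prod.snd_sub]
      linear_combination (-(b.2 - a.2)) * e1 + (b.1 - a.1) * e2
    rw [hTdef]
    simp only [hnum]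
    field_simp
    exact div_self hD0
  have hS0 : S φ₀ = s₀ := by
    have hnum : crv (dir φ₀) (q - a) = s₀ * crv (dir φ₀) (b - a) := by
      simp only [crv, Prod.fst_sub, Prod.snd_sub]
      linear_combination (-(dir φ₀).2) * e1 + (dir φ₀).1 * e2
    rw [hSdef]
    simp only [hnum]
    field_simp
    exact div_self hD0
  -- nearby rays still hit
  have hev1 : ∀ᶠ φ in nhds φ₀, 0 < T φ := hcT.eventually (eventually_gt_nhds (by rw [hT0]; exact ht₀pos))
  have hev2 : ∀ᶠ φ in nhds φ₀, 0 < S φ := hcS.eventually (eventually_gt_nhds (by rw [hS0]; exact hs0))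
  have hev3 : ∀ᶠ φ in nhds φ₀, S φ < 1 := hcS.eventually (eventually_lt_nhds (by rw [hS0]; exact hs1))
  have hev4 : ∀ᶠ φ in nhds φ₀, D φ ≠ 0 := hcD.continuousAt.eventually_ne hD0
  filter_upwards [hev1, hev2, hev3, hev4] with φ h1 h2 h3 h4
  refine ⟨a + S φ • (b - a), ⟨T φ, h1.le, ?_⟩, ?_⟩
  · rw [hTdef, hSdef]
    exact (ray_meets q a (b - a) (dir φ) h4).symm
  · rw [SimplePolygon.edge, segment_eq_image' ℝ]
    exact ⟨S φ, ⟨h2.le, h3.le⟩, rfl⟩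

/-- If no vertex of `P` lies on a ray of angle in `[θ-ε, θ+ε]` from `q`, then
the edge lists of `r_{θ-ε}` and `r_{θ+ε}` coincide. -/
theorem hits_eq_of_no_vertex_between (P : SimplePolygon) (q : ℝ × ℝ)
    (hq : q ∈ P.inside) (hw : P.wgp q) (θ ε : ℝ) (hε : 0 < ε)
    (hsec : ∀ i : ZMod P.n, ∀ φ ∈ Set.Icc (θ - ε) (θ + ε), P.vtx i ∉ rayFrom q φ) :
    P.hits q (θ - ε) = P.hits q (θ + ε) := by
  have hqe : ∀ j : ZMod P.n, q ∉ P.edge j := fun j hj => hq.1 (Set.mem_iUnion.2 ⟨j, hj⟩)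
  have h3n := P.three_le
  haveI : NeZero P.n := ⟨by omega⟩
  haveI : Fact (1 < P.n) := ⟨by omega⟩
  have hne : ∀ i : ZMod P.n, i ≠ i + 1 := fun i => left_ne_add.mpr one_ne_zero
  ext i
  simp only [SimplePolygon.hits, Set.mem_setOf_eq]
  haveI : PreconnectedSpace (Icc (θ - ε) (θ + ε)) :=
    Subtype.preconnectedSpace isPreconnected_Icc
  set T : Set (Icc (θ - ε) (θ + ε)) :=
    Subtype.val ⁻¹' {φ : ℝ | (rayFrom q φ ∩ P.edge i).Nonempty} with hT
  have hclopen : IsClopen T := by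
    constructor
    · exact (isClosed_hitSet P q i).preimage continuous_subtype_val
    · rw [isOpen_iff_mem_nhds]
      intro φ hφ
      exact continuous_subtype_val.continuousAt.preimage_mem_nhds
        (hitSet_mem_nhds P q i φ (hqe i) (hw i (i + 1) (hne i))
          (hsec i φ φ.2) (hsec (i + 1) φ φ.2) hφ)
  have h1 : (θ - ε) ∈ Icc (θ - ε) (θ + ε) := ⟨le_refl _, by linarith⟩
  have h2 : (θ + ε) ∈ Icc (θ - ε) (θ + ε) := ⟨by linarith, le_refl _⟩
  rcases isClopen_iff.mp hclopen with h | h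
  · constructor
    · intro hm
      exact absurd (show (⟨θ - ε, h1⟩ : Icc (θ - ε) (θ + ε)) ∈ T from hm)
        (by rw [h]; exact notMem_empty _)
    · intro hm
      exact absurd (show (⟨θ + ε, h2⟩ : Icc (θ - ε) (θ + ε)) ∈ T from hm)
        (by rw [h]; exact notMem_empty _)
  · constructor
    · intro _
      exact show (⟨θ + ε, h2⟩ : Icc (θ - ε) (θ + ε)) ∈ T from h ▸ mem_univ _
    · intro _
      exact show (⟨θ - ε, h1⟩ : Icc (θ - ε) (θ + ε)) ∈ T from h ▸ mem_univ _
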